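/- Consider the ADmC (min-consensus) dynamics on a connected graph with constant inputs: u_k(i) = u(i) for all k. Assume α > 0 and x satisfies the ADmC update with parameter α. Let x̲₀ = min_{i∈V} x₀(i), u̲ = min_{i∈V} u(i), δ the diameter of G, and T' = ⌈max(u̲ − x̲₀, 0)/α⌉. Then for every k ≥ max(δ + 1, T') and every vertex i ∈ V, the steady-state tracking error satisfies |x_k(i) − u̲| ≤ α·δ. -/

import Mathlib

open Finset

/-- ADmC (min-consensus) steady-state error bound with constant inputs (Corollary 3). -/
theorem admc_min_steady_state_error
    {V : Type*} [Fintype V] [Nonempty V] [DecidableEq V]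
    (G : SimpleGraph V) [DecidableRel G.Adj] (hconn : G.Connected)
    (α : ℝ) (hα : 0 < α)
    (u : V → ℝ)
    (x : ℕ → V → ℝ)
    (hx : ∀ k i, x (k + 1) i =
      min ((insert i (G.neighborFinset i)).inf' (insert_nonempty i _) (x k) + α) (u i))
    (δ : ℕ) (hδ : δ = Finset.univ.sup fun p : V × V => G.dist p.1 p.2)
    (T' : ℕ)
    (hT' : T' = ⌈max (Finset.univ.inf' univ_nonempty u
                      - Finset.univ.inf' univ_nonempty (x 0)) 0 / α⌉₊) :
    ∀ k, max (δ + 1) T' ≤ k → ∀ i : V,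
      |x k i - Finset.univ.inf' univ_nonempty u| ≤ α * δ := by
  classical
  obtain ⟨j, -, hj⟩ := Finset.exists_mem_eq_inf' (univ_nonempty) u
  set ubar := Finset.univ.inf' univ_nonempty u with hubar
  set m : ℕ → ℝ := fun k => Finset.univ.inf' univ_nonempty (x k) with hm
  -- upper bound lemma
  have keyA : ∀ k, ∀ i, G.dist i j ≤ k → x (k+1) i ≤ ubar + α * G.dist i j := by
    intro k
    induction k with
    | zero =>
      intro i hdi
      have hij : i = j := by
        have h0 : G.dist i j = 0 := Nat.le_zero.mp hdi
        rcases (SimpleGraph.dist_eq_zero_iff_eq_or_not_reachable).mp h0 with h | h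
        · exact h
        · exact absurd (hconn i j) h
      subst hij
      have : x 1 i ≤ u i := by rw [hx]; exact min_le_right _ _
      have hd0 : G.dist i i = 0 := SimpleGraph.dist_self
      rw [hd0]
      push_cast
      rw [hj]
      linarith
    | succ k ih =>
      intro i hdi
      by_cases h0 : G.dist i j = 0
      · have hij : i = j := by
          rcases (SimpleGraph.dist_eq_zero_iff_eq_or_not_reachable).mp h0 with h | h
          · exact h
          · exact absurd (hconn i j) h
        subst hij
        have : x (k+2) i ≤ u i := by rw [hx]; exact min_le_right _ _
        rw [h0]; push_cast; rw [hj]; linarith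
      · obtain ⟨p, hp⟩ := hconn.exists_walk_length_eq_dist i j
        cases p with
        | nil => exact absurd SimpleGraph.dist_self h0
        | cons hadj q =>
          rename_i w
          have hql : q.length + 1 = G.dist i j := by simpa using hp
          have hdw : G.dist w j ≤ q.length := SimpleGraph.dist_le q
          have hdwk : G.dist w j ≤ k := by omega
          have hih := ih w hdwk
          have hmem : w ∈ insert i (G.neighborFinset i) :=
            Finset.mem_insert_of_mem ((SimpleGraph.mem_neighborFinset G i w).mpr hadj)
          have hinf : (insert i (G.neighborFinset i)).inf' (insert_nonempty i _) (x (k+1))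
              ≤ x (k+1) w := Finset.inf'_le _ hmem
          have hstep : x (k+2) i ≤ x (k+1) w + α := by
            rw [hx]
            exact le_trans (min_le_left _ _) (by linarith)
          have hcast : (G.dist w j : ℝ) + 1 ≤ (G.dist i j : ℝ) := by
            have : G.dist w j + 1 ≤ G.dist i j := by omega
            exact_mod_cast this
          nlinarith [hα.le]
  -- lower bound lemma
  have keyB : ∀ k : ℕ, min (m 0 + k * α) ubar ≤ m k := by
    intro k
    induction k with
    | zero => simp
    | succ k ih =>
      obtain ⟨i₀, -, hi₀⟩ := Finset.exists_mem_eq_inf' (univ_nonempty) (x (k+1))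
      simp only [hm]
      rw [show Finset.univ.inf' univ_nonempty (x (k+1)) = x (k+1) i₀ from hi₀, hx]
      obtain ⟨j₀, hj₀mem, hj₀⟩ :=
        Finset.exists_mem_eq_inf' (insert_nonempty i₀ (G.neighborFinset i₀)) (x k)
      have h1 : m k ≤ (insert i₀ (G.neighborFinset i₀)).inf' (insert_nonempty i₀ _) (x k) := by
        rw [hj₀]
        exact Finset.inf'_le _ (Finset.mem_univ j₀)
      have h2 : ubar ≤ u i₀ := Finset.inf'_le _ (Finset.mem_univ i₀)
      apply le_min
      · rcases le_total (m 0 + k * α) ubar with h | h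
        · have := min_le_left (m 0 + k * α) ubar
          have hmin : min (m 0 + (k+1:ℕ) * α) ubar ≤ m 0 + (k+1:ℕ) * α := min_le_left _ _
          push_cast at hmin ⊢
          have := ih
          rw [min_eq_left h] at this
          linarith
        · have := ih
          rw [min_eq_right h] at this
          have hmin : min (m 0 + ((k:ℝ)+1) * α) ubar ≤ ubar := min_le_right _ _
          push_cast
          linarith
      · exact le_trans (min_le_right _ _) h2
  intro k hk i
  have hk1 : δ + 1 ≤ k := le_trans (le_max_left _ _) hk
  have hkT : T' ≤ k := le_trans (le_max_right _ _) hk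
  obtain ⟨n, rfl⟩ : ∃ n, k = n + 1 := ⟨k - 1, by omega⟩
  have hdδ : G.dist i j ≤ δ := by
    rw [hδ]
    exact Finset.le_sup (f := fun p : V × V => G.dist p.1 p.2) (Finset.mem_univ (i, j))
  -- upper bound
  have hup : x (n+1) i ≤ ubar + α * δ := by
    have := keyA n i (by omega)
    have hc : (G.dist i j : ℝ) ≤ (δ : ℝ) := by exact_mod_cast hdδ
    nlinarith [hα.le]
  -- lower bound
  have hTα : ubar - m 0 ≤ ((n:ℝ)+1) * α := by
    have hceil : max (ubar - m 0) 0 / α ≤ (T' : ℝ) := by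
      rw [hT']; exact Nat.le_ceil _
    have : max (ubar - m 0) 0 ≤ (T' : ℝ) * α := by
      rw [div_le_iff₀ hα] at hceil; exact hceil
    have hT'le : (T' : ℝ) ≤ (n:ℝ) + 1 := by exact_mod_cast (by omega : T' ≤ n + 1)
    have := le_max_left (ubar - m 0) 0
    nlinarith [hα.le]
  have hlow : ubar ≤ x (n+1) i := by
    have hb := keyB (n+1)
    have : ubar ≤ min (m 0 + ((n:ℕ)+1) * α) ubar := by
      apply le_min
      · push_cast; linarith
      · exact le_refl _
    have hmx : m (n+1) ≤ x (n+1) i := Finset.inf'_le _ (Finset.mem_univ i)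
    push_cast at hb this
    linarith
  have hαδ : (0:ℝ) ≤ α * δ := by positivity
  rw [abs_le]
  constructor <;> linarith
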